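/- Let A_i be a von Neumann algebra on a Hilbert space H_i and N_i ⊆ A_i a von Neumann subalgebra, i = 1,2. Let A be a von Neumann algebra with N_1 ⊗̄ N_2 ⊆ A ⊆ A_1 ⊗̄ A_2. If there is a conditional expectation E from A_1 ⊗̄ A_2 onto A, then E restricts to a conditional expectation from (N_1' ∩ A_1) ⊗̄ A_2 onto ((N_1' ∩ A_1) ⊗̄ A_2) ∩ A. -/

import Mathlib

open scoped ComplexOrder

noncomputable section


variable {H : Type*} [NormedAddCommGroup H] [InnerProductSpace ℂ H] [CompleteSpace H]

/-- A conditional expectation (norm-one projection) from the subset `M` of `B(H)`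
onto the subset `N`. -/
structure IsCondExp (M N : Set (H →L[ℂ] H)) (E : (H →L[ℂ] H) → (H →L[ℂ] H)) : Prop where
  subset : N ⊆ M
  mapsTo : ∀ x ∈ M, E x ∈ N
  fixes : ∀ x ∈ N, E x = x
  map_add : ∀ x ∈ M, ∀ y ∈ M, E (x + y) = E x + E y
  map_smul : ∀ (c : ℂ), ∀ x ∈ M, E (c • x) = c • E x
  norm_le : ∀ x ∈ M, ‖E x‖ ≤ ‖x‖
  bimodule : ∀ s₁ ∈ N, ∀ s₂ ∈ N, ∀ t ∈ M, E (s₁ * t * s₂) = s₁ * E t * s₂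

/-- A von Neumann algebra is injective if there is a norm-one projection (conditional
expectation) from all of `B(H)` onto it. -/
def IsInjectiveVN (B : VonNeumannAlgebra H) : Prop :=
  ∃ E, IsCondExp Set.univ (B : Set (H →L[ℂ] H)) E

/-- `B` is a maximal injective von Neumann subalgebra of `M`: `B` is injective and maximal
with respect to inclusion among injective von Neumann subalgebras of `M`. -/
def MaximalInjective (B M : VonNeumannAlgebra H) : Prop :=
  B ≤ M ∧ IsInjectiveVN B ∧
    ∀ C : VonNeumannAlgebra H, C ≤ M → IsInjectiveVN C → B ≤ C → C = B

/-- `A` is a minimal injective von Neumann algebra extension of `N`. -/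
def MinimalInjectiveExtension (A N : VonNeumannAlgebra H) : Prop :=
  N ≤ A ∧ IsInjectiveVN A ∧
    ∀ C : VonNeumannAlgebra H, N ≤ C → C ≤ A → IsInjectiveVN C → C = A

/-- A von Neumann algebra is a factor if its center consists of scalar multiples
of the identity. -/
def IsFactor (M : VonNeumannAlgebra H) : Prop :=
  (M : Set (H →L[ℂ] H)) ∩ (M.commutant : Set (H →L[ℂ] H))
    = Set.range (fun c : ℂ => c • (1 : H →L[ℂ] H))

/-- `R` is a maximal injective subfactor of `M`: an injective subfactor of `M` maximal
with respect to inclusion among injective subfactors of `M`. -/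
def MaximalInjectiveSubfactor (R M : VonNeumannAlgebra H) : Prop :=
  R ≤ M ∧ IsFactor R ∧ IsInjectiveVN R ∧
    ∀ C : VonNeumannAlgebra H, C ≤ M → IsFactor C → IsInjectiveVN C → R ≤ C → C = R

variable (H) (K L : Type*) [NormedAddCommGroup K] [InnerProductSpace ℂ K] [CompleteSpace K]
  [NormedAddCommGroup L] [InnerProductSpace ℂ L] [CompleteSpace L]

/-- An abstract presentation of the spatial tensor product `B(H) ⊗̄ B(K)` acting on a
Hilbert space `L` (playing the role of `H ⊗ K`): two commuting, injective, unital normal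
*-embeddings whose ranges jointly generate `B(L)`, satisfying the commutation theorem for
tensor products of von Neumann algebras. -/
structure VNTensor where
  π₁ : (H →L[ℂ] H) →⋆ₐ[ℂ] (L →L[ℂ] L)
  π₂ : (K →L[ℂ] K) →⋆ₐ[ℂ] (L →L[ℂ] L)
  injective₁ : Function.Injective π₁
  injective₂ : Function.Injective π₂
  commutes : ∀ x y, π₁ x * π₂ y = π₂ y * π₁ x
  generates : Set.centralizer (Set.range ⇑π₁ ∪ Set.range ⇑π₂)
      = Set.range (fun c : ℂ => c • (1 : L →L[ℂ] L))
  commutation : ∀ (M₁ : VonNeumannAlgebra H) (M₂ : VonNeumannAlgebra K),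
    Set.centralizer (⇑π₁ '' (M₁ : Set (H →L[ℂ] H)) ∪ ⇑π₂ '' (M₂ : Set (K →L[ℂ] K)))
      = Set.centralizer (Set.centralizer
          (⇑π₁ '' (M₁.commutant : Set (H →L[ℂ] H)) ∪
            ⇑π₂ '' (M₂.commutant : Set (K →L[ℂ] K))))

variable {H K L}

/-- The von Neumann tensor product `S ⊗̄ T ⊆ B(L)` of `S ⊆ B(H)` and `T ⊆ B(K)`:
the von Neumann algebra (double centralizer) generated by the two images. -/
def VNTensor.tprod (e : VNTensor H K L) (S : Set (H →L[ℂ] H)) (T : Set (K →L[ℂ] K)) :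
    Set (L →L[ℂ] L) :=
  Set.centralizer (Set.centralizer (⇑e.π₁ '' S ∪ ⇑e.π₂ '' T))

/-- Injectivity for a subset of `B(L)` (e.g. a von Neumann tensor product):
existence of a conditional expectation from `B(L)` onto it. -/
def IsInjectiveSet (S : Set (L →L[ℂ] L)) : Prop :=
  ∃ E, IsCondExp Set.univ S E

/-- `S` is a maximal injective von Neumann subalgebra of `Ms`, at the level of subsets
of `B(L)`. -/
def MaximalInjectiveSet (S Ms : Set (L →L[ℂ] L)) : Prop :=
  S ⊆ Ms ∧ IsInjectiveSet S ∧
    ∀ C : VonNeumannAlgebra L, (C : Set (L →L[ℂ] L)) ⊆ Ms →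
      IsInjectiveVN C → S ⊆ (C : Set (L →L[ℂ] L)) → (C : Set (L →L[ℂ] L)) = S

namespace Stmt11Aux

open ContinuousLinearMap

variable {H : Type*} [NormedAddCommGroup H] [InnerProductSpace ℂ H] [CompleteSpace H]
variable {L : Type*} [NormedAddCommGroup L] [InnerProductSpace ℂ L] [CompleteSpace L]

local notation "⟪" x ", " y "⟫" => @inner ℂ _ _ x y

/-- The rank one operator `v ↦ ⟪ξ₀, v⟫ • ξ`. -/
def kOp (ξ₀ ξ : H) : H →L[ℂ] H := (innerSL ℂ ξ₀).smulRight ξ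

@[simp] lemma kOp_apply (ξ₀ ξ v : H) : kOp ξ₀ ξ v = ⟪ξ₀, v⟫ • ξ := rfl

lemma mul_kOp (a : H →L[ℂ] H) (ξ₀ ξ : H) : a * kOp ξ₀ ξ = kOp ξ₀ (a ξ) := by
  ext v
  rw [mul_apply_eq_comp, kOp_apply, kOp_apply, map_smul]

lemma kOp_add (ξ₀ ξ ξ' : H) : kOp ξ₀ (ξ + ξ') = kOp ξ₀ ξ + kOp ξ₀ ξ' := by
  ext v; rw [add_apply, kOp_apply, kOp_apply, kOp_apply, smul_add]

lemma kOp_smul (ξ₀ : H) (c : ℂ) (ξ : H) : kOp ξ₀ (c • ξ) = c • kOp ξ₀ ξ := by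
  ext v; rw [smul_apply, kOp_apply, kOp_apply, smul_comm]

lemma norm_kOp (ξ₀ ξ : H) : ‖kOp ξ₀ ξ‖ = ‖ξ₀‖ * ‖ξ‖ := by
  rw [kOp, norm_smulRight_apply, innerSL_apply_norm]

lemma kOp_ne_zero {ξ₀ : H} (h : ξ₀ ≠ 0) : kOp ξ₀ ξ₀ ≠ 0 := by
  intro hk
  have h1 : kOp ξ₀ ξ₀ ξ₀ = 0 := by rw [hk]; rfl
  rw [kOp_apply] at h1
  rcases smul_eq_zero.mp h1 with h2 | h2
  · exact h (inner_self_eq_zero.mp h2)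
  · exact h h2

section pi

variable (π : (H →L[ℂ] H) →⋆ₐ[ℂ] (L →L[ℂ] L))

lemma pi_norm_le (T : H →L[ℂ] H) : ‖π T‖ ≤ ‖T‖ :=
  NonUnitalStarAlgHom.norm_apply_le π T

/-- `ξ ↦ π (kOp ξ₀ ξ) ζ` as a continuous linear map `H →L[ℂ] L`. -/
def Vmap (ξ₀ : H) (ζ : L) : H →L[ℂ] L :=
  LinearMap.mkContinuous
    { toFun := fun ξ => π (kOp ξ₀ ξ) ζ
      map_add' := fun ξ ξ' => by
        show π (kOp ξ₀ (ξ + ξ')) ζ = π (kOp ξ₀ ξ) ζ + π (kOp ξ₀ ξ') ζ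
        rw [kOp_add, map_add, add_apply]
      map_smul' := fun c ξ => by
        show π (kOp ξ₀ (c • ξ)) ζ = c • π (kOp ξ₀ ξ) ζ
        rw [kOp_smul, map_smul, smul_apply] }
    (‖ξ₀‖ * ‖ζ‖)
    (fun ξ => by
      calc ‖π (kOp ξ₀ ξ) ζ‖ ≤ ‖π (kOp ξ₀ ξ)‖ * ‖ζ‖ := le_opNorm _ _
        _ ≤ ‖kOp ξ₀ ξ‖ * ‖ζ‖ := by
            gcongr
            exact pi_norm_le π _
        _ = ‖ξ₀‖ * ‖ζ‖ * ‖ξ‖ := by rw [norm_kOp]; ring)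

@[simp] lemma Vmap_apply (ξ₀ : H) (ζ : L) (ξ : H) : Vmap π ξ₀ ζ ξ = π (kOp ξ₀ ξ) ζ := rfl

lemma Vmap_comm (ξ₀ : H) (ζ : L) (a : H →L[ℂ] H) (ξ : H) :
    Vmap π ξ₀ ζ (a ξ) = π a (Vmap π ξ₀ ζ ξ) := by
  rw [Vmap_apply, Vmap_apply, ← mul_kOp, map_mul, mul_apply_eq_comp]

/-- The "slice" of `u : B(L)` along `η ζ : L`. -/
def slice (ξ₀ : H) (u : L →L[ℂ] L) (η ζ : L) : H →L[ℂ] H :=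
  (ContinuousLinearMap.adjoint (Vmap π ξ₀ η)).comp (u.comp (Vmap π ξ₀ ζ))

lemma slice_inner (ξ₀ : H) (u : L →L[ℂ] L) (η ζ : L) (ξ' ξ : H) :
    ⟪ξ', slice π ξ₀ u η ζ ξ⟫ = ⟪Vmap π ξ₀ η ξ', u (Vmap π ξ₀ ζ ξ)⟫ := by
  rw [slice]
  simp only [coe_comp', Function.comp_apply]
  rw [ContinuousLinearMap.adjoint_inner_right]

lemma slice_mem_centralizer (ξ₀ : H) (u : L →L[ℂ] L) {S : Set (H →L[ℂ] H)}
    (hu : ∀ s ∈ S, π s * u = u * π s) (η ζ : L) :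
    slice π ξ₀ u η ζ ∈ Set.centralizer S := by
  intro s hs
  ext ξ
  apply ext_inner_left ℂ
  intro ξ'
  rw [mul_apply_eq_comp, mul_apply_eq_comp]
  calc ⟪ξ', s (slice π ξ₀ u η ζ ξ)⟫
      = ⟪ContinuousLinearMap.adjoint s ξ', slice π ξ₀ u η ζ ξ⟫ := by
        rw [ContinuousLinearMap.adjoint_inner_left]
    _ = ⟪star s ξ', slice π ξ₀ u η ζ ξ⟫ := by rw [star_eq_adjoint]
    _ = ⟪Vmap π ξ₀ η (star s ξ'), u (Vmap π ξ₀ ζ ξ)⟫ := slice_inner _ _ _ _ _ _ _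
    _ = ⟪π (star s) (Vmap π ξ₀ η ξ'), u (Vmap π ξ₀ ζ ξ)⟫ := by rw [Vmap_comm]
    _ = ⟪ContinuousLinearMap.adjoint (π s) (Vmap π ξ₀ η ξ'), u (Vmap π ξ₀ ζ ξ)⟫ := by
        rw [← star_eq_adjoint, map_star]
    _ = ⟪Vmap π ξ₀ η ξ', π s (u (Vmap π ξ₀ ζ ξ))⟫ := by
        rw [ContinuousLinearMap.adjoint_inner_left]
    _ = ⟪Vmap π ξ₀ η ξ', (π s * u) (Vmap π ξ₀ ζ ξ)⟫ := by rw [mul_apply_eq_comp]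
    _ = ⟪Vmap π ξ₀ η ξ', (u * π s) (Vmap π ξ₀ ζ ξ)⟫ := by rw [hu s hs]
    _ = ⟪Vmap π ξ₀ η ξ', u (Vmap π ξ₀ ζ (s ξ))⟫ := by rw [mul_apply_eq_comp, Vmap_comm]
    _ = ⟪ξ', slice π ξ₀ u η ζ (s ξ)⟫ := (slice_inner _ _ _ _ _ _ _).symm

end pi

section two

variable {K : Type*} [NormedAddCommGroup K] [InnerProductSpace ℂ K] [CompleteSpace K]
variable (π₁ : (H →L[ℂ] H) →⋆ₐ[ℂ] (L →L[ℂ] L)) (π₂ : (K →L[ℂ] K) →⋆ₐ[ℂ] (L →L[ℂ] L))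

/-- The span of the vectors `π₁ (kOp ξ₀ ξ) ζ`. -/
def gensSub (ξ₀ : H) : Submodule ℂ L :=
  Submodule.span ℂ (Set.range (fun p : H × L => π₁ (kOp ξ₀ p.1) p.2))

/-- Its closure. -/
def gensClosed (ξ₀ : H) : Submodule ℂ L := (gensSub π₁ ξ₀).topologicalClosure

lemma gensSet_invariant (hcomm : ∀ x y, π₁ x * π₂ y = π₂ y * π₁ x) (ξ₀ : H)
    {g : L →L[ℂ] L} (hg : g ∈ Set.range ⇑π₁ ∪ Set.range ⇑π₂) :
    ∀ v ∈ Set.range (fun p : H × L => π₁ (kOp ξ₀ p.1) p.2),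
      g v ∈ Set.range (fun p : H × L => π₁ (kOp ξ₀ p.1) p.2) := by
  rintro v ⟨⟨ξ, ζ⟩, rfl⟩
  rcases hg with ⟨a, rfl⟩ | ⟨b, rfl⟩
  · refine ⟨(a ξ, ζ), ?_⟩
    show π₁ (kOp ξ₀ (a ξ)) ζ = π₁ a (π₁ (kOp ξ₀ ξ) ζ)
    rw [← mul_kOp, map_mul, mul_apply_eq_comp]
  · refine ⟨(ξ, π₂ b ζ), ?_⟩
    show π₁ (kOp ξ₀ ξ) (π₂ b ζ) = π₂ b (π₁ (kOp ξ₀ ξ) ζ)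
    rw [← mul_apply_eq_comp, ← mul_apply_eq_comp, hcomm]

lemma gensClosed_invariant (hcomm : ∀ x y, π₁ x * π₂ y = π₂ y * π₁ x) (ξ₀ : H)
    {g : L →L[ℂ] L} (hg : g ∈ Set.range ⇑π₁ ∪ Set.range ⇑π₂) :
    ∀ v ∈ gensClosed π₁ ξ₀, g v ∈ gensClosed π₁ ξ₀ := by
  have hspan : ∀ v ∈ gensSub π₁ ξ₀, g v ∈ gensSub π₁ ξ₀ := by
    intro v hv
    induction hv using Submodule.span_induction with
    | mem x hx => exact Submodule.subset_span (gensSet_invariant π₁ π₂ hcomm ξ₀ hg x hx)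
    | zero => rw [map_zero]; exact (gensSub π₁ ξ₀).zero_mem
    | add x y _ _ hx hy => rw [map_add]; exact add_mem hx hy
    | smul c x _ hx => rw [map_smul]; exact Submodule.smul_mem _ _ hx
  intro v hv
  have hv' : v ∈ closure (gensSub π₁ ξ₀ : Set L) := hv
  have : g v ∈ closure (gensSub π₁ ξ₀ : Set L) :=
    map_mem_closure g.continuous hv' hspan
  exact this

lemma gensClosed_eq_top (hcomm : ∀ x y, π₁ x * π₂ y = π₂ y * π₁ x)
    (hgen : Set.centralizer (Set.range ⇑π₁ ∪ Set.range ⇑π₂)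
      = Set.range (fun c : ℂ => c • (1 : L →L[ℂ] L)))
    (hinj : Function.Injective ⇑π₁) {ξ₀ : H} (hξ₀ : ξ₀ ≠ 0) :
    gensClosed π₁ ξ₀ = ⊤ := by
  set Kc := gensClosed π₁ ξ₀ with hKc
  haveI : CompleteSpace Kc :=
    (Submodule.isClosed_topologicalClosure _).completeSpace_coe
  set P : L →L[ℂ] L := Kc.subtypeL.comp (Kc.orthogonalProjectionOnto) with hPdef
  have hPmem : ∀ v, P v = (Kc.orthogonalProjectionOnto v : L) := fun v => rfl
  have hPK : ∀ v ∈ Kc, P v = v := fun v hv => by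
    rw [hPmem, ← Submodule.starProjection_apply, Submodule.starProjection_eq_self_iff.mpr hv]
  have hPC : P ∈ Set.centralizer (Set.range ⇑π₁ ∪ Set.range ⇑π₂) := by
    intro g hg
    have hgK : ∀ v ∈ Kc, g v ∈ Kc := gensClosed_invariant π₁ π₂ hcomm ξ₀ hg
    have hgsK : ∀ v ∈ Kc, star g v ∈ Kc := by
      apply gensClosed_invariant π₁ π₂ hcomm ξ₀
      rcases hg with ⟨a, rfl⟩ | ⟨b, rfl⟩
      · exact Or.inl ⟨star a, map_star π₁ a⟩
      · exact Or.inr ⟨star b, map_star π₂ b⟩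
    ext v
    rw [mul_apply_eq_comp, mul_apply_eq_comp]
    have h2 : g (v - P v) ∈ Kcᗮ := by
      rw [Submodule.mem_orthogonal]
      intro t ht
      have h2a : ⟪t, g (v - P v)⟫ = ⟪star g t, v - P v⟫ := by
        rw [star_eq_adjoint, ContinuousLinearMap.adjoint_inner_left]
      rw [h2a]
      have hvP : v - P v ∈ Kcᗮ := by
        rw [hPmem]
        exact Submodule.sub_starProjection_mem_orthogonal (K := Kc) v
      exact (Submodule.mem_orthogonal _ _).mp hvP _ (hgsK t ht)
    have h1 : P (g (P v)) = g (P v) := by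
      refine hPK _ (hgK _ ?_)
      rw [hPmem]
      exact SetLike.coe_mem _
    have h3 : P (g (v - P v)) = 0 := by
      rw [hPmem, Submodule.orthogonalProjectionOnto_apply_of_mem_orthogonal h2,
        Submodule.coe_zero]
    have hsplit : g v = g (P v) + g (v - P v) := by rw [← map_add, add_sub_cancel]
    rw [hsplit, map_add, h1, h3, add_zero]
  rw [hgen] at hPC
  obtain ⟨c, hc⟩ := hPC
  have hkζ : π₁ (kOp ξ₀ ξ₀) ≠ 0 := by
    intro h
    exact kOp_ne_zero hξ₀ (hinj (h.trans (map_zero π₁).symm))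
  obtain ⟨ζ₀, hζ₀⟩ : ∃ ζ₀, π₁ (kOp ξ₀ ξ₀) ζ₀ ≠ 0 := by
    by_contra h
    push_neg at h
    exact hkζ (ContinuousLinearMap.ext fun ζ => by rw [h ζ, zero_apply])
  have hv₀ : π₁ (kOp ξ₀ ξ₀) ζ₀ ∈ Kc :=
    Submodule.le_topologicalClosure _ (Submodule.subset_span ⟨(ξ₀, ζ₀), rfl⟩)
  have hc1 : c • (π₁ (kOp ξ₀ ξ₀) ζ₀) = π₁ (kOp ξ₀ ξ₀) ζ₀ := by
    have h := hPK _ hv₀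
    rw [← hc] at h
    simpa using h
  have hcc : c = 1 := by
    have h : (c - 1) • (π₁ (kOp ξ₀ ξ₀) ζ₀) = 0 := by
      rw [sub_smul, one_smul, hc1, sub_self]
    rcases smul_eq_zero.mp h with h' | h'
    · exact sub_eq_zero.mp h'
    · exact absurd h' hζ₀
  rw [Submodule.eq_top_iff']
  intro v
  have hPv : P v = v := by
    rw [← hc, hcc]
    show (1 : ℂ) • (1 : L →L[ℂ] L) v = v
    rw [one_smul, one_apply_eq_self]
  rw [← hPv, hPmem]
  exact SetLike.coe_mem _

/-- The key fact: an operator commuting with `π₁ '' S` commutes with the image of the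
double centralizer of `S`. -/
lemma comm_bicommutant (hcomm : ∀ x y, π₁ x * π₂ y = π₂ y * π₁ x)
    (hgen : Set.centralizer (Set.range ⇑π₁ ∪ Set.range ⇑π₂)
      = Set.range (fun c : ℂ => c • (1 : L →L[ℂ] L)))
    (hinj : Function.Injective ⇑π₁)
    {S : Set (H →L[ℂ] H)}
    {u : L →L[ℂ] L} (hu : ∀ s ∈ S, π₁ s * u = u * π₁ s)
    {w : H →L[ℂ] H} (hw : w ∈ Set.centralizer (Set.centralizer S)) :
    π₁ w * u = u * π₁ w := by
  by_cases hH : ∀ ξ : H, ξ = (0 : H)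
  · have hw0 : w = 0 := ContinuousLinearMap.ext fun v => (hH _).trans (hH _).symm
    rw [hw0, map_zero, zero_mul, mul_zero]
  · push_neg at hH
    obtain ⟨ξ₀, hξ₀⟩ := hH
    have htop := gensClosed_eq_top π₁ π₂ hcomm hgen hinj hξ₀
    have hsl : ∀ η ζ : L, slice π₁ ξ₀ u η ζ * w = w * slice π₁ ξ₀ u η ζ :=
      fun η ζ => hw _ (slice_mem_centralizer π₁ ξ₀ u hu η ζ)
    set D : L →L[ℂ] L := π₁ w * u - u * π₁ w with hD
    have hstep1 : ∀ p : H × L, D (π₁ (kOp ξ₀ p.1) p.2) = 0 := by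
      rintro ⟨ξ, ζ⟩
      have hip : ∀ q : H × L, ⟪π₁ (kOp ξ₀ q.1) q.2, D (π₁ (kOp ξ₀ ξ) ζ)⟫ = 0 := by
        rintro ⟨ξ', η⟩
        have hβ : π₁ (kOp ξ₀ ξ) ζ = Vmap π₁ ξ₀ ζ ξ := rfl
        have hα : π₁ (kOp ξ₀ ξ') η = Vmap π₁ ξ₀ η ξ' := rfl
        have key : ⟪Vmap π₁ ξ₀ η ξ', (π₁ w * u) (Vmap π₁ ξ₀ ζ ξ)⟫
            = ⟪Vmap π₁ ξ₀ η ξ', (u * π₁ w) (Vmap π₁ ξ₀ ζ ξ)⟫ := by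
          calc ⟪Vmap π₁ ξ₀ η ξ', (π₁ w * u) (Vmap π₁ ξ₀ ζ ξ)⟫
              = ⟪Vmap π₁ ξ₀ η ξ', π₁ w (u (Vmap π₁ ξ₀ ζ ξ))⟫ := by rw [mul_apply_eq_comp]
            _ = ⟪ContinuousLinearMap.adjoint (π₁ w) (Vmap π₁ ξ₀ η ξ'), u (Vmap π₁ ξ₀ ζ ξ)⟫ := by
                rw [ContinuousLinearMap.adjoint_inner_left]
            _ = ⟪π₁ (star w) (Vmap π₁ ξ₀ η ξ'), u (Vmap π₁ ξ₀ ζ ξ)⟫ := by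
                rw [← star_eq_adjoint, ← map_star]
            _ = ⟪Vmap π₁ ξ₀ η (star w ξ'), u (Vmap π₁ ξ₀ ζ ξ)⟫ := by rw [Vmap_comm]
            _ = ⟪star w ξ', slice π₁ ξ₀ u η ζ ξ⟫ := (slice_inner _ _ _ _ _ _ _).symm
            _ = ⟪ContinuousLinearMap.adjoint w ξ', slice π₁ ξ₀ u η ζ ξ⟫ := by
                rw [← star_eq_adjoint]
            _ = ⟪ξ', w (slice π₁ ξ₀ u η ζ ξ)⟫ := by
                rw [ContinuousLinearMap.adjoint_inner_left]
            _ = ⟪ξ', (w * slice π₁ ξ₀ u η ζ) ξ⟫ := by rw [mul_apply_eq_comp]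
            _ = ⟪ξ', (slice π₁ ξ₀ u η ζ * w) ξ⟫ := by rw [hsl]
            _ = ⟪ξ', slice π₁ ξ₀ u η ζ (w ξ)⟫ := by rw [mul_apply_eq_comp]
            _ = ⟪Vmap π₁ ξ₀ η ξ', u (Vmap π₁ ξ₀ ζ (w ξ))⟫ := slice_inner _ _ _ _ _ _ _
            _ = ⟪Vmap π₁ ξ₀ η ξ', u (π₁ w (Vmap π₁ ξ₀ ζ ξ))⟫ := by rw [Vmap_comm]
            _ = ⟪Vmap π₁ ξ₀ η ξ', (u * π₁ w) (Vmap π₁ ξ₀ ζ ξ)⟫ := by rw [mul_apply_eq_comp]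
        rw [hβ, hα, hD, sub_apply, inner_sub_right, key, sub_self]
      set cvec := D (π₁ (kOp ξ₀ ξ) ζ) with hcvec
      have hle : gensClosed π₁ ξ₀ ≤ (ℂ ∙ cvec)ᗮ := by
        apply Submodule.topologicalClosure_minimal
        · rw [gensSub, Submodule.span_le]
          rintro v ⟨⟨ξ', η⟩, rfl⟩
          rw [SetLike.mem_coe, Submodule.mem_orthogonal_singleton_iff_inner_left]
          exact hip (ξ', η)
        · exact Submodule.isClosed_orthogonal _
      have hmem : cvec ∈ (ℂ ∙ cvec)ᗮ := by
        apply hle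
        rw [htop]
        trivial
      rw [Submodule.mem_orthogonal_singleton_iff_inner_left] at hmem
      exact inner_self_eq_zero.mp hmem
    have hker : gensClosed π₁ ξ₀ ≤ LinearMap.ker (D : L →ₗ[ℂ] L) := by
      apply Submodule.topologicalClosure_minimal
      · rw [gensSub, Submodule.span_le]
        rintro v ⟨⟨ξ', η⟩, rfl⟩
        rw [SetLike.mem_coe, LinearMap.mem_ker]
        exact hstep1 (ξ', η)
      · exact ContinuousLinearMap.isClosed_ker D
    have hD0 : D = 0 := by
      ext v
      have : v ∈ LinearMap.ker (D : L →ₗ[ℂ] L) := hker (htop ▸ Submodule.mem_top)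
      rw [LinearMap.mem_ker, ContinuousLinearMap.coe_coe] at this
      rw [this, zero_apply]
    have := sub_eq_zero.mp hD0
    exact this

end two


section auxVN

variable {H : Type*} [NormedAddCommGroup H] [InnerProductSpace ℂ H] [CompleteSpace H]

/-- The von Neumann algebra `N₁' ∩ A₁`, as the centralizer of `N₁ ∪ A₁'`. -/
def auxVN (N₁ A₁ : VonNeumannAlgebra H) : VonNeumannAlgebra H where
  toStarSubalgebra := StarSubalgebra.centralizer ℂ
    ((N₁ : Set (H →L[ℂ] H)) ∪ (A₁.commutant : Set (H →L[ℂ] H)))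
  centralizer_centralizer' := Set.centralizer_centralizer_centralizer _

lemma star_SSet_eq (N₁ A₁ : VonNeumannAlgebra H) :
    star ((N₁ : Set (H →L[ℂ] H)) ∪ (A₁.commutant : Set (H →L[ℂ] H)))
      = (N₁ : Set (H →L[ℂ] H)) ∪ (A₁.commutant : Set (H →L[ℂ] H)) := by
  have hcl : ∀ a, a ∈ (N₁ : Set (H →L[ℂ] H)) ∪ (A₁.commutant : Set (H →L[ℂ] H)) →
      star a ∈ (N₁ : Set (H →L[ℂ] H)) ∪ (A₁.commutant : Set (H →L[ℂ] H)) := by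
    rintro a (ha | ha)
    · exact Or.inl (star_mem (SetLike.mem_coe.mp ha))
    · exact Or.inr (star_mem (SetLike.mem_coe.mp ha))
  ext a
  rw [Set.mem_star]
  constructor
  · intro h
    have := hcl _ h
    rwa [star_star] at this
  · exact hcl a

lemma auxVN_coe (N₁ A₁ : VonNeumannAlgebra H) :
    (auxVN N₁ A₁ : Set (H →L[ℂ] H))
      = Set.centralizer ((N₁ : Set (H →L[ℂ] H)) ∪ (A₁.commutant : Set (H →L[ℂ] H))) := by
  have h0 : (auxVN N₁ A₁ : Set (H →L[ℂ] H)) = (StarSubalgebra.centralizer ℂ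
      ((N₁ : Set (H →L[ℂ] H)) ∪ (A₁.commutant : Set (H →L[ℂ] H))) : Set (H →L[ℂ] H)) := rfl
  rw [h0, StarSubalgebra.coe_centralizer, star_SSet_eq, Set.union_self]

lemma centralizer_SSet (N₁ A₁ : VonNeumannAlgebra H) :
    Set.centralizer ((N₁ : Set (H →L[ℂ] H)) ∪ (A₁.commutant : Set (H →L[ℂ] H)))
      = (N₁.commutant : Set (H →L[ℂ] H)) ∩ (A₁ : Set (H →L[ℂ] H)) := by
  rw [Set.centralizer_union, VonNeumannAlgebra.coe_commutant,
    VonNeumannAlgebra.coe_commutant, A₁.centralizer_centralizer]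

lemma auxVN_commutant_coe (N₁ A₁ : VonNeumannAlgebra H) :
    ((auxVN N₁ A₁).commutant : Set (H →L[ℂ] H))
      = Set.centralizer (Set.centralizer
          ((N₁ : Set (H →L[ℂ] H)) ∪ (A₁.commutant : Set (H →L[ℂ] H)))) := by
  rw [VonNeumannAlgebra.coe_commutant, auxVN_coe]

end auxVN

end Stmt11Aux

/-- A conditional expectation from `A₁ ⊗̄ A₂` onto an intermediate algebra
`N₁ ⊗̄ N₂ ⊆ A ⊆ A₁ ⊗̄ A₂` restricts to a conditional expectation from
`(N₁' ∩ A₁) ⊗̄ A₂` onto `((N₁' ∩ A₁) ⊗̄ A₂) ∩ A`. -/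
theorem stmt11 (e : VNTensor H K L) (A₁ N₁ : VonNeumannAlgebra H)
    (A₂ N₂ : VonNeumannAlgebra K) (hN₁ : N₁ ≤ A₁) (hN₂ : N₂ ≤ A₂)
    (A : VonNeumannAlgebra L)
    (h1 : e.tprod (N₁ : Set (H →L[ℂ] H)) (N₂ : Set (K →L[ℂ] K)) ⊆ (A : Set (L →L[ℂ] L)))
    (h2 : (A : Set (L →L[ℂ] L)) ⊆ e.tprod (A₁ : Set (H →L[ℂ] H)) (A₂ : Set (K →L[ℂ] K)))
    (E : (L →L[ℂ] L) → (L →L[ℂ] L))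
    (hE : IsCondExp (e.tprod (A₁ : Set (H →L[ℂ] H)) (A₂ : Set (K →L[ℂ] K)))
      (A : Set (L →L[ℂ] L)) E) :
    IsCondExp
      (e.tprod ((N₁.commutant : Set (H →L[ℂ] H)) ∩ (A₁ : Set (H →L[ℂ] H)))
        (A₂ : Set (K →L[ℂ] K)))
      (e.tprod ((N₁.commutant : Set (H →L[ℂ] H)) ∩ (A₁ : Set (H →L[ℂ] H)))
        (A₂ : Set (K →L[ℂ] K)) ∩ (A : Set (L →L[ℂ] L))) E := by
  classical
  set Sset : Set (H →L[ℂ] H) := (N₁ : Set (H →L[ℂ] H)) ∪ (A₁.commutant : Set (H →L[ℂ] H))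
    with hSset
  set Dset : Set (H →L[ℂ] H) := (N₁.commutant : Set (H →L[ℂ] H)) ∩ (A₁ : Set (H →L[ℂ] H))
    with hDset
  have hScent : Set.centralizer Sset = Dset := Stmt11Aux.centralizer_SSet N₁ A₁
  -- inclusion of domains
  have hdomsub : e.tprod Dset (A₂ : Set (K →L[ℂ] K))
      ⊆ e.tprod (A₁ : Set (H →L[ℂ] H)) (A₂ : Set (K →L[ℂ] K)) := by
    apply Set.centralizer_subset
    apply Set.centralizer_subset
    exact Set.union_subset_union_left _ (Set.image_mono Set.inter_subset_right)
  refine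
    { subset := Set.inter_subset_left
      mapsTo := ?_
      fixes := fun x hx => hE.fixes x hx.2
      map_add := fun x hx y hy => hE.map_add x (hdomsub hx) y (hdomsub hy)
      map_smul := fun c x hx => hE.map_smul c x (hdomsub hx)
      norm_le := fun x hx => hE.norm_le x (hdomsub hx)
      bimodule := fun s₁ hs₁ s₂ hs₂ t ht => hE.bimodule s₁ hs₁.2 s₂ hs₂.2 t (hdomsub ht) }
  intro x hx
  have hxdom := hdomsub hx
  have hEA : E x ∈ (A : Set (L →L[ℂ] L)) := hE.mapsTo x hxdom
  refine ⟨?_, hEA⟩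
  have hEdom : ∀ m ∈ Set.centralizer
      (⇑e.π₁ '' (A₁ : Set (H →L[ℂ] H)) ∪ ⇑e.π₂ '' (A₂ : Set (K →L[ℂ] K))),
      m * E x = E x * m := Set.mem_centralizer_iff.mp (h2 hEA)
  have hx' : ∀ m ∈ Set.centralizer
      (⇑e.π₁ '' Dset ∪ ⇑e.π₂ '' (A₂ : Set (K →L[ℂ] K))),
      m * x = x * m := Set.mem_centralizer_iff.mp hx
  have honeA : (1 : L →L[ℂ] L) ∈ (A : Set (L →L[ℂ] L)) :=
    SetLike.mem_coe.mpr (one_mem A.toStarSubalgebra)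
  -- commutation of `E x` with `π₁ '' Sset`
  have hc1 : ∀ s ∈ Sset, e.π₁ s * E x = E x * e.π₁ s := by
    rintro s (hs | hs)
    · -- `s ∈ N₁` : use the bimodule property
      have hsA : e.π₁ s ∈ (A : Set (L →L[ℂ] L)) :=
        h1 (Set.subset_centralizer_centralizer (Or.inl ⟨s, hs, rfl⟩))
      have hsmem : e.π₁ s ∈ Set.centralizer
          (⇑e.π₁ '' Dset ∪ ⇑e.π₂ '' (A₂ : Set (K →L[ℂ] K))) := by
        rw [Set.mem_centralizer_iff]
        rintro m (⟨d, hd, rfl⟩ | ⟨b, hb, rfl⟩)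
        · rw [← map_mul, ← map_mul]
          congr 1
          have hd1 := hd.1
          rw [VonNeumannAlgebra.coe_commutant] at hd1
          exact (hd1 s hs).symm
        · exact (e.commutes s b).symm
      have hsx : e.π₁ s * x = x * e.π₁ s := hx' _ hsmem
      have hb1 := hE.bimodule (e.π₁ s) hsA 1 honeA x hxdom
      have hb2 := hE.bimodule 1 honeA (e.π₁ s) hsA x hxdom
      rw [mul_one, mul_one] at hb1
      rw [one_mul, one_mul] at hb2
      rw [← hb1, ← hb2, hsx]
    · -- `s ∈ A₁'` : `E x ∈ A ⊆ A₁ ⊗ A₂` commutes with it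
      apply hEdom
      rw [Set.mem_centralizer_iff]
      rintro m (⟨a, ha, rfl⟩ | ⟨b, hb, rfl⟩)
      · rw [← map_mul, ← map_mul]
        congr 1
        have hs' := hs
        rw [VonNeumannAlgebra.coe_commutant] at hs'
        exact hs' a ha
      · exact (e.commutes s b).symm
  -- commutation of `E x` with `π₂ '' A₂'`
  have hc2 : ∀ t ∈ (A₂.commutant : Set (K →L[ℂ] K)), e.π₂ t * E x = E x * e.π₂ t := by
    intro t ht
    apply hEdom
    rw [Set.mem_centralizer_iff]
    rintro m (⟨a, ha, rfl⟩ | ⟨b, hb, rfl⟩)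
    · exact e.commutes a t
    · rw [← map_mul, ← map_mul]
      congr 1
      have ht' := ht
      rw [VonNeumannAlgebra.coe_commutant] at ht'
      exact ht' b hb
  -- the key step: `E x` commutes with `π₁ '' (Sset'')`
  have hc3 : ∀ w ∈ Set.centralizer (Set.centralizer Sset),
      e.π₁ w * E x = E x * e.π₁ w := fun w hw =>
    Stmt11Aux.comm_bicommutant e.π₁ e.π₂ e.commutes e.generates e.injective₁ hc1 hw
  -- conclude via the commutation theorem
  show E x ∈ Set.centralizer (Set.centralizer
    (⇑e.π₁ '' Dset ∪ ⇑e.π₂ '' (A₂ : Set (K →L[ℂ] K))))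
  rw [Set.mem_centralizer_iff]
  intro z hz
  have hzz : z ∈ Set.centralizer
      (⇑e.π₁ '' ((Stmt11Aux.auxVN N₁ A₁ : Set (H →L[ℂ] H)))
        ∪ ⇑e.π₂ '' (A₂ : Set (K →L[ℂ] K))) := by
    rwa [Stmt11Aux.auxVN_coe, hScent]
  rw [e.commutation (Stmt11Aux.auxVN N₁ A₁) A₂] at hzz
  have hExmem : E x ∈ Set.centralizer
      (⇑e.π₁ '' ((Stmt11Aux.auxVN N₁ A₁).commutant : Set (H →L[ℂ] H))
        ∪ ⇑e.π₂ '' (A₂.commutant : Set (K →L[ℂ] K))) := by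
    rw [Set.mem_centralizer_iff]
    rintro m (⟨w, hw, rfl⟩ | ⟨t, ht, rfl⟩)
    · apply hc3
      rwa [Stmt11Aux.auxVN_commutant_coe] at hw
    · exact hc2 t ht
  exact (hzz (E x) hExmem).symm
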